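/- Let L be a flat bounded lattice and let d₁, d₂, d₃ ∈ L \ {⊥, ⊤} be pairwise distinct. Let μ(x, y, z) denote the majority term (y ⊔ z) ⊓ (z ⊔ x) ⊓ (x ⊔ y). Then for every a ∈ L: μ(a ⊓ d₁, a ⊓ d₂, a ⊓ d₃) equals ⊤ if a = ⊤, and equals ⊥ otherwise. In other words, the unary polynomial function a ↦ μ(a ⊓ d₁, a ⊓ d₂, a ⊓ d₃) is the monotone characteristic function of {⊤}. -/
import Mathlib

universe u

open scoped Classical

/-- In a flat bounded lattice, the unary polynomial `a ↦ μ(a ⊓ d₁, a ⊓ d₂, a ⊓ d₃)`,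
where `μ(x, y, z) = (y ⊔ z) ⊓ (z ⊔ x) ⊓ (x ⊔ y)` and `d₁, d₂, d₃ ∉ {⊥, ⊤}` are
pairwise distinct, is the monotone characteristic function of `{⊤}`. -/
theorem stmt12 {L : Type u} [Lattice L] [BoundedOrder L]
    (hbt : (⊥ : L) ≠ ⊤)
    (hflat : ∀ a b : L, a ≤ b → a = ⊥ ∨ b = ⊤ ∨ a = b)
    (d₁ d₂ d₃ : L)
    (hd₁ : d₁ ∉ ({⊥, ⊤} : Set L)) (hd₂ : d₂ ∉ ({⊥, ⊤} : Set L))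
    (hd₃ : d₃ ∉ ({⊥, ⊤} : Set L))
    (h12 : d₁ ≠ d₂) (h13 : d₁ ≠ d₃) (h23 : d₂ ≠ d₃)
    (a : L) :
    (((a ⊓ d₂) ⊔ (a ⊓ d₃)) ⊓ ((a ⊓ d₃) ⊔ (a ⊓ d₁))) ⊓ ((a ⊓ d₁) ⊔ (a ⊓ d₂)) =
      if a = ⊤ then ⊤ else ⊥ := by
  simp only [Set.mem_insert_iff, Set.mem_singleton_iff, not_or] at hd₁ hd₂ hd₃
  obtain ⟨h1b, h1t⟩ := hd₁
  obtain ⟨h2b, h2t⟩ := hd₂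
  obtain ⟨h3b, h3t⟩ := hd₃
  -- join of two distinct middle elements is ⊤
  have key : ∀ x y : L, x ≠ ⊥ → x ≠ ⊤ → y ≠ ⊥ → y ≠ ⊤ → x ≠ y → x ⊔ y = ⊤ := by
    intro x y hxb hxt hyb hyt hxy
    rcases hflat x (x ⊔ y) le_sup_left with h | h | h
    · exact absurd h hxb
    · exact h
    · rcases hflat y x (h ▸ le_sup_right) with h' | h' | h'
      · exact absurd h' hyb
      · exact absurd h' hxt
      · exact absurd h'.symm hxy
  by_cases ha : a = ⊤
  · subst ha
    simp only [top_inf_eq, if_pos rfl]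
    rw [key d₂ d₃ h2b h2t h3b h3t h23, key d₃ d₁ h3b h3t h1b h1t (Ne.symm h13),
      key d₁ d₂ h1b h1t h2b h2t h12]
    simp
  · rw [if_neg ha]
    -- each a ⊓ dᵢ is ⊥ or a (the latter only if dᵢ = a)
    have meet : ∀ d : L, d ≠ ⊥ → d ≠ ⊤ → a ⊓ d = ⊥ ∨ (a ⊓ d = a ∧ d = a) := by
      intro d hdb hdt
      rcases hflat (a ⊓ d) d inf_le_right with h | h | h
      · exact Or.inl h
      · exact absurd h hdt
      · rcases hflat d a (h ▸ inf_le_left) with h' | h' | h'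
        · exact Or.inl (by rw [h, h'])
        · exact absurd h' ha
        · exact Or.inr ⟨by rw [h, h'], h'⟩
    rcases meet d₁ h1b h1t with m1 | ⟨m1, e1⟩ <;>
      rcases meet d₂ h2b h2t with m2 | ⟨m2, e2⟩ <;>
      rcases meet d₃ h3b h3t with m3 | ⟨m3, e3⟩ <;>
      first
      | (exfalso; first
          | exact h12 (e1.trans e2.symm)
          | exact h13 (e1.trans e3.symm)
          | exact h23 (e2.trans e3.symm))
      | (rw [m1, m2, m3]; simp)
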